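/- A compact metric space K is a continuous image of [0,1] if and only if K is nonempty, connected, and locally path-connected. -/

import Mathlib

open Set Metric unitInterval

namespace HMaux

variable {K : Type*} [MetricSpace K]


instance : LocallyPathConnectedSpace (Set.Icc (0:ℝ) 1) := by
  refine LocPathConnectedSpace.of_bases (fun x => Metric.nhds_basis_ball) fun x r hr => ?_
  rw [Topology.IsInducing.subtypeVal.isPathConnected_iff]
  have : Subtype.val '' (Metric.ball x r : Set (Set.Icc (0:ℝ) 1))
      = Metric.ball (x:ℝ) r ∩ Set.Icc 0 1 := by
    ext y
    simp only [Set.mem_image, Metric.mem_ball, Set.mem_inter_iff]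
    constructor
    · rintro ⟨z, hz, rfl⟩; exact ⟨by simpa [Subtype.dist_eq] using hz, z.2⟩
    · rintro ⟨hy, hy2⟩; exact ⟨⟨y, hy2⟩, by simpa [Subtype.dist_eq] using hy, rfl⟩
  rw [this]
  exact ((convex_ball (x:ℝ) r).inter (convex_Icc 0 1)).isPathConnected
    ⟨x, by simp [hr], x.2⟩



variable {K : Type*} [MetricSpace K]

/-- Insert a "spike" into a continuous map `f : [0,1] → K` on the interval
`[τ-r, τ+r]`, going from `f(τ-r)` to `s` and back to `f(τ+r)`. -/
lemma spike (f : C(unitInterval, K)) (τ r : ℝ) (hr : 0 < r)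
    (h0 : 0 ≤ τ - r) (h1 : τ + r ≤ 1) {s : K}
    (γ₁ : Path (f ⟨τ - r, ⟨h0, by linarith⟩⟩) s)
    (γ₂ : Path (f ⟨τ + r, ⟨by linarith, h1⟩⟩) s) :
    ∃ g : C(unitInterval, K),
      g ⟨τ, ⟨by linarith, by linarith⟩⟩ = s ∧
      (∀ t : unitInterval, r ≤ |(t : ℝ) - τ| → g t = f t) ∧
      (∀ t : unitInterval, |(t : ℝ) - τ| ≤ r →
        (∃ u, g t = γ₁ u) ∨ (∃ u, g t = γ₂ u)) := by
  classical
  set g3 : unitInterval → K := fun t =>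
    if (t : ℝ) ≤ τ + r then γ₂.extend ((τ + r - (t : ℝ)) / r) else f t with hg3
  set g2 : unitInterval → K := fun t =>
    if (t : ℝ) ≤ τ then γ₁.extend (((t : ℝ) - (τ - r)) / r) else g3 t with hg2
  set g : unitInterval → K := fun t =>
    if (t : ℝ) ≤ τ - r then f t else g2 t with hgdef
  have hc3 : Continuous g3 := by
    refine Continuous.if_le (γ₂.continuous_extend.comp (by fun_prop)) f.continuous
      continuous_subtype_val continuous_const fun t ht => ?_
    rw [ht, sub_self, zero_div, Path.extend_zero]
    exact (congrArg f (Subtype.ext ht)).symm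
  have hc2 : Continuous g2 := by
    refine Continuous.if_le (γ₁.continuous_extend.comp (by fun_prop)) hc3
      continuous_subtype_val continuous_const fun t ht => ?_
    rw [hg3]
    simp only
    rw [if_pos (by rw [ht]; linarith), ht]
    have e1 : (τ - (τ - r)) / r = 1 := by field_simp; ring
    have e2 : (τ + r - τ) / r = 1 := by field_simp; ring
    rw [e1, e2, Path.extend_one, Path.extend_one]
  have hcont : Continuous g := by
    refine Continuous.if_le f.continuous hc2 continuous_subtype_val continuous_const
      fun t ht => ?_
    rw [hg2]
    simp only
    rw [if_pos (by rw [ht]; linarith), ht, sub_self, zero_div, Path.extend_zero]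
    exact congrArg f (Subtype.ext ht)
  have hout : ∀ t : unitInterval, r ≤ |(t : ℝ) - τ| → g t = f t := by
    intro t ht
    rcases le_or_gt ((t : ℝ)) τ with h | h
    · have h' : (t : ℝ) ≤ τ - r := by
        rw [abs_of_nonpos (by linarith)] at ht; linarith
      rw [hgdef]; simp only [if_pos h']
    · have h' : τ + r ≤ (t : ℝ) := by
        rw [abs_of_pos (by linarith)] at ht; linarith
      rw [hgdef]
      simp only
      rw [if_neg (by linarith), hg2]
      simp only
      rw [if_neg (by linarith), hg3]
      simp only
      rcases eq_or_lt_of_le h' with he | he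
      · rw [if_pos he.ge]
        rw [← he, sub_self, zero_div, Path.extend_zero]
        exact congrArg f (Subtype.ext he)
      · rw [if_neg (by linarith)]
  refine ⟨⟨g, hcont⟩, ?_, hout, ?_⟩
  · show g _ = s
    rw [hgdef]
    simp only
    rw [if_neg (by linarith), hg2]
    simp only
    rw [if_pos (by linarith)]
    have e1 : ((τ : ℝ) - (τ - r)) / r = 1 := by field_simp; ring
    push_cast
    rw [e1, Path.extend_one]
  · intro t ht
    show (∃ u, g t = γ₁ u) ∨ (∃ u, g t = γ₂ u)
    obtain ⟨hl, hu⟩ := abs_le.mp ht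
    rw [hgdef]
    simp only
    split_ifs with h1'
    · left
      have heq : (t : ℝ) = τ - r := le_antisymm h1' (by linarith)
      exact ⟨0, by rw [Path.source]; exact congrArg f (Subtype.ext heq)⟩
    · rw [hg2]
      simp only
      split_ifs with h2'
      · left
        refine ⟨⟨((t : ℝ) - (τ - r)) / r, div_nonneg (by linarith) hr.le,
          (div_le_one hr).mpr (by linarith)⟩, ?_⟩
        rw [Path.extend_apply γ₁ ⟨div_nonneg (by linarith) hr.le,
          (div_le_one hr).mpr (by linarith)⟩]
      · rw [hg3]
        simp only
        rw [if_pos (by linarith)]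
        right
        refine ⟨⟨(τ + r - (t : ℝ)) / r, div_nonneg (by linarith) hr.le,
          (div_le_one hr).mpr (by linarith)⟩, ?_⟩
        rw [Path.extend_apply γ₂ ⟨div_nonneg (by linarith) hr.le,
          (div_le_one hr).mpr (by linarith)⟩]

lemma multi (r ρ c : ℝ) (hr : 0 < r) (hρ : 0 < ρ) (hc : 0 ≤ c)
    (H : ∀ x y : K, dist x y < ρ → ∃ γ : Path x y, ∀ u, dist (γ u) x ≤ c)
    (L : List (ℝ × K)) :
    ∀ (f : C(unitInterval, K)),
    (∀ p ∈ L, 0 ≤ p.1 - r ∧ p.1 + r ≤ 1) →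
    (∀ p ∈ L, ∀ t : unitInterval, |(t : ℝ) - p.1| ≤ r → dist (f t) p.2 < ρ) →
    L.Pairwise (fun p q => 2 * r ≤ |p.1 - q.1|) →
    ∃ g : C(unitInterval, K),
      (∀ p ∈ L, ∃ t, g t = p.2) ∧
      (∀ t, dist (g t) (f t) ≤ c + 2 * ρ) ∧
      (∀ t : unitInterval, (∀ p ∈ L, r ≤ |(t : ℝ) - p.1|) → g t = f t) := by
  induction L with
  | nil =>
    intro f _ _ _
    exact ⟨f, by simp, fun t => by simp only [dist_self]; linarith, fun t _ => rfl⟩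
  | cons p L' ih =>
    intro f hio hQ hpw
    obtain ⟨hp0, hp1⟩ := hio p (List.mem_cons_self)
    have hmem1 : |((⟨p.1 - r, ⟨hp0, by linarith⟩⟩ : unitInterval) : ℝ) - p.1| ≤ r := by
      have : (p.1 - r : ℝ) - p.1 = -r := by ring
      rw [this, abs_neg, abs_of_pos hr]
    have hmem2 : |((⟨p.1 + r, ⟨by linarith, hp1⟩⟩ : unitInterval) : ℝ) - p.1| ≤ r := by
      have : (p.1 + r : ℝ) - p.1 = r := by ring
      rw [this, abs_of_pos hr]
    have hd1 := hQ p (List.mem_cons_self) _ hmem1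
    have hd2 := hQ p (List.mem_cons_self) _ hmem2
    obtain ⟨γ₁, hγ₁⟩ := H _ _ hd1
    obtain ⟨γ₂, hγ₂⟩ := H _ _ hd2
    obtain ⟨g₁, hmid, hout, hin⟩ := spike f p.1 r hr hp0 hp1 γ₁ γ₂
    -- points within r of a tail-center are at distance ≥ r from the head center
    have hfar : ∀ q ∈ L', ∀ t : unitInterval, |(t : ℝ) - q.1| ≤ r →
        r ≤ |(t : ℝ) - p.1| := by
      intro q hq t htq
      have h2r : 2 * r ≤ |p.1 - q.1| := (List.pairwise_cons.mp hpw).1 q hq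
      have := abs_sub_le p.1 ((t : ℝ)) q.1
      have habs : |p.1 - (t : ℝ)| = |(t : ℝ) - p.1| := abs_sub_comm _ _
      linarith
    have hQ' : ∀ q ∈ L', ∀ t : unitInterval, |(t : ℝ) - q.1| ≤ r →
        dist (g₁ t) q.2 < ρ := by
      intro q hq t htq
      rw [hout t (hfar q hq t htq)]
      exact hQ q (List.mem_cons_of_mem p hq) t htq
    obtain ⟨g, hits', hdist', hout'⟩ := ih g₁
      (fun q hq => hio q (List.mem_cons_of_mem p hq)) hQ'
      (List.pairwise_cons.mp hpw).2
    -- g₁ and g agree near the head center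
    have hagree : ∀ t : unitInterval, |(t : ℝ) - p.1| ≤ r → g t = g₁ t := by
      intro t htp
      refine hout' t fun q hq => ?_
      have h2r : 2 * r ≤ |p.1 - q.1| := (List.pairwise_cons.mp hpw).1 q hq
      have := abs_sub_le p.1 ((t : ℝ)) q.1
      have habs : |p.1 - (t : ℝ)| = |(t : ℝ) - p.1| := abs_sub_comm _ _
      linarith
    refine ⟨g, ?_, ?_, ?_⟩
    · intro q hq
      rcases List.mem_cons.mp hq with rfl | hq'
      · refine ⟨⟨q.1, ⟨by linarith, by linarith⟩⟩, ?_⟩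
        rw [hagree _ (by simp [sub_self, abs_of_nonneg, hr.le]), hmid]
      · exact hits' q hq'
    · intro t
      by_cases hcase : |(t : ℝ) - p.1| ≤ r
      · rw [hagree t hcase]
        rcases hin t hcase with ⟨u, hu⟩ | ⟨u, hu⟩
        · rw [hu]
          calc dist (γ₁ u) (f t) ≤ dist (γ₁ u) (f ⟨p.1 - r, ⟨hp0, by linarith⟩⟩)
                + dist (f ⟨p.1 - r, ⟨hp0, by linarith⟩⟩) p.2 + dist p.2 (f t) :=
              dist_triangle4 _ _ _ _
            _ ≤ c + 2 * ρ := by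
              have := hγ₁ u
              have h3 : dist p.2 (f t) < ρ := by
                rw [dist_comm]; exact hQ p (List.mem_cons_self) t hcase
              linarith
        · rw [hu]
          calc dist (γ₂ u) (f t) ≤ dist (γ₂ u) (f ⟨p.1 + r, ⟨by linarith, hp1⟩⟩)
                + dist (f ⟨p.1 + r, ⟨by linarith, hp1⟩⟩) p.2 + dist p.2 (f t) :=
              dist_triangle4 _ _ _ _
            _ ≤ c + 2 * ρ := by
              have := hγ₂ u
              have h3 : dist p.2 (f t) < ρ := by
                rw [dist_comm]; exact hQ p (List.mem_cons_self) t hcase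
              linarith
      · rw [← hout t (le_of_not_ge hcase)]
        exact hdist' t
    · intro t ht
      rw [hout' t fun q hq => ht q (List.mem_cons_of_mem p hq),
        hout t (ht p (List.mem_cons_self))]
lemma pick (f : C(unitInterval, K)) (ρ : ℝ) :
    ∀ ls : List K, (∀ s ∈ ls, ∃ t : unitInterval, dist (f t) s < ρ) →
    ∃ L : List (ℝ × K), L.map Prod.snd = ls ∧ (L.map Prod.fst).Pairwise (· ≠ ·) ∧
      ∀ p ∈ L, p.1 ∈ Ioo (0:ℝ) 1 ∧
        ∃ t : unitInterval, (t : ℝ) = p.1 ∧ dist (f t) p.2 < ρ := by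
  have keyinf : ∀ s : K, (∃ t : unitInterval, dist (f t) s < ρ) →
      {x : ℝ | x ∈ Ioo (0:ℝ) 1 ∧
        ∃ t : unitInterval, (t : ℝ) = x ∧ dist (f t) s < ρ}.Infinite := by
    intro s ⟨t₀, ht₀⟩
    have hW : IsOpen {t : unitInterval | dist (f t) s < ρ} :=
      isOpen_lt (f.continuous.dist continuous_const) continuous_const
    obtain ⟨ε, hε, hball⟩ := Metric.isOpen_iff.mp hW t₀ ht₀
    set a := max 0 ((t₀ : ℝ) - ε) with ha
    set b := min 1 ((t₀ : ℝ) + ε) with hb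
    have hab : a < b := by
      have h0 := t₀.2.1; have h1 := t₀.2.2
      apply max_lt <;> [skip; skip] <;> apply lt_min <;> linarith
    refine (Set.Ioo_infinite hab).mono fun x hx => ?_
    obtain ⟨hxa, hxb⟩ := hx
    have hx0 : 0 < x := lt_of_le_of_lt (le_max_left _ _) hxa
    have hx1 : x < 1 := lt_of_lt_of_le hxb (min_le_left _ _)
    refine ⟨⟨hx0, hx1⟩, ⟨x, hx0.le, hx1.le⟩, rfl, ?_⟩
    have : (⟨x, hx0.le, hx1.le⟩ : unitInterval) ∈ Metric.ball t₀ ε := by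
      rw [Metric.mem_ball, Subtype.dist_eq, Real.dist_eq, abs_lt]
      constructor
      · have := le_max_right 0 ((t₀ : ℝ) - ε); linarith
      · have := min_le_right 1 ((t₀ : ℝ) + ε); linarith
    exact hball this
  intro ls
  induction ls with
  | nil => exact fun _ => ⟨[], rfl, List.Pairwise.nil, by simp⟩
  | cons s ls' ih =>
    intro hw
    obtain ⟨L', hsnd, hpw, hprop⟩ := ih fun q hq => hw q (List.mem_cons_of_mem s hq)
    have hinf := keyinf s (hw s (List.mem_cons_self))
    obtain ⟨τ, hτmem, hτnot⟩ := (hinf.diff (L'.map Prod.fst).finite_toSet).nonempty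
    refine ⟨(τ, s) :: L', by simpa using hsnd, ?_, ?_⟩
    · rw [List.map_cons, List.pairwise_cons]
      refine ⟨fun a ha => fun h => hτnot ?_, hpw⟩
      have hh : τ = a := h
      show τ ∈ {x | x ∈ L'.map Prod.fst}
      rw [hh]
      exact ha
    · rintro p hp
      rcases List.mem_cons.mp hp with rfl | hp'
      · exact ⟨hτmem.1, hτmem.2⟩
      · exact hprop p hp'

lemma stage [CompactSpace K] (ρ c θ : ℝ) (hρ : 0 < ρ) (hc : 0 ≤ c) (hθ : 0 < θ)
    (H : ∀ x y : K, dist x y < ρ → ∃ γ : Path x y, ∀ u, dist (γ u) x ≤ c)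
    (f : C(unitInterval, K)) (hf : ∀ x : K, ∃ t, dist (f t) x < ρ / 2) :
    ∃ g : C(unitInterval, K), (∀ x : K, ∃ t, dist (g t) x < θ) ∧
      ∀ t, dist (g t) (f t) ≤ c + 2 * ρ := by
  classical
  -- a finite θ-net
  obtain ⟨T, -, hTfin, hTcov⟩ := finite_cover_balls_of_compact (isCompact_univ : IsCompact (Set.univ : Set K)) hθ
  set ls := hTfin.toFinset.toList with hls
  have hlsmem : ∀ s : K, s ∈ ls ↔ s ∈ T := by
    intro s; rw [hls, Finset.mem_toList, Set.Finite.mem_toFinset]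
  obtain ⟨L, hsnd, hpwne, hprop⟩ := pick f (ρ / 2) ls fun s _ => hf s
  -- uniform continuity modulus
  obtain ⟨r₀, hr₀, hr₀c⟩ := Metric.uniformContinuous_iff.mp
    (CompactSpace.uniformContinuous_of_continuous f.continuous) (ρ / 2) (half_pos hρ)
  -- choose the radius r
  set FS : Finset ℝ := (L.map Prod.fst).toFinset with hFS
  set D : Finset ℝ := ((FS ×ˢ FS).filter fun q => q.1 ≠ q.2).image fun q => |q.1 - q.2|
    with hD
  set E : Finset ℝ := FS.image fun τ => min τ (1 - τ) with hE
  have hDins : ((insert (1:ℝ) D)).Nonempty := ⟨1, Finset.mem_insert_self _ _⟩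
  have hEins : ((insert (1:ℝ) E)).Nonempty := ⟨1, Finset.mem_insert_self _ _⟩
  set r : ℝ := min (r₀ / 2)
    (min ((insert (1:ℝ) D).min' hDins / 2) ((insert (1:ℝ) E).min' hEins)) with hrdef
  have hFSIoo : ∀ τ ∈ FS, τ ∈ Ioo (0:ℝ) 1 := by
    intro τ hτ
    rw [hFS, List.mem_toFinset, List.mem_map] at hτ
    obtain ⟨p, hp, rfl⟩ := hτ
    exact (hprop p hp).1
  have hDpos : 0 < (insert (1:ℝ) D).min' hDins := by
    rw [Finset.lt_min'_iff]
    intro b hb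
    rcases Finset.mem_insert.mp hb with rfl | hb'
    · norm_num
    · rw [hD, Finset.mem_image] at hb'
      obtain ⟨q, hq, rfl⟩ := hb'
      rw [Finset.mem_filter] at hq
      exact abs_pos.mpr (sub_ne_zero.mpr hq.2)
  have hEpos : 0 < (insert (1:ℝ) E).min' hEins := by
    rw [Finset.lt_min'_iff]
    intro b hb
    rcases Finset.mem_insert.mp hb with rfl | hb'
    · norm_num
    · rw [hE, Finset.mem_image] at hb'
      obtain ⟨τ, hτ, rfl⟩ := hb'
      obtain ⟨h1, h2⟩ := hFSIoo τ hτ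
      exact lt_min h1 (by linarith)
  have hr : 0 < r := lt_min (by linarith) (lt_min (by linarith) hEpos)
  have hFSof : ∀ p ∈ L, p.1 ∈ FS := by
    intro p hp
    rw [hFS, List.mem_toFinset, List.mem_map]
    exact ⟨p, hp, rfl⟩
  have hio : ∀ p ∈ L, 0 ≤ p.1 - r ∧ p.1 + r ≤ 1 := by
    intro p hp
    have hmem : min p.1 (1 - p.1) ∈ insert (1:ℝ) E :=
      Finset.mem_insert_of_mem (Finset.mem_image.mpr ⟨p.1, hFSof p hp, rfl⟩)
    have hle : r ≤ min p.1 (1 - p.1) :=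
      le_trans (le_trans (min_le_right _ _) (min_le_right _ _))
        (Finset.min'_le _ _ hmem)
    exact ⟨by have := le_trans hle (min_le_left _ _); linarith,
      by have := le_trans hle (min_le_right _ _); linarith⟩
  have hQ : ∀ p ∈ L, ∀ t : unitInterval, |(t : ℝ) - p.1| ≤ r → dist (f t) p.2 < ρ := by
    intro p hp t ht
    obtain ⟨-, t₀, ht₀, hd₀⟩ := hprop p hp
    have hdist : dist t t₀ < r₀ := by
      rw [Subtype.dist_eq, Real.dist_eq, ht₀]
      calc |(t : ℝ) - p.1| ≤ r := ht
        _ ≤ r₀ / 2 := min_le_left _ _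
        _ < r₀ := by linarith
    calc dist (f t) p.2 ≤ dist (f t) (f t₀) + dist (f t₀) p.2 := dist_triangle _ _ _
      _ < ρ / 2 + ρ / 2 := add_lt_add (hr₀c hdist) hd₀
      _ = ρ := by ring
  have hpw : L.Pairwise fun p q => 2 * r ≤ |p.1 - q.1| := by
    rw [List.pairwise_map] at hpwne
    refine hpwne.imp_of_mem fun {p q} hp hq hne => ?_
    have hmem : |p.1 - q.1| ∈ insert (1:ℝ) D := by
      refine Finset.mem_insert_of_mem (Finset.mem_image.mpr
        ⟨(p.1, q.1), Finset.mem_filter.mpr ⟨Finset.mem_product.mpr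
          ⟨hFSof p hp, hFSof q hq⟩, hne⟩, rfl⟩)
    calc 2 * r ≤ 2 * ((insert (1:ℝ) D).min' hDins / 2) := by
          have : r ≤ (insert (1:ℝ) D).min' hDins / 2 :=
            le_trans (min_le_right _ _) (min_le_left _ _)
          linarith
      _ = (insert (1:ℝ) D).min' hDins := by ring
      _ ≤ |p.1 - q.1| := Finset.min'_le _ _ hmem
  obtain ⟨g, hits, hdist, -⟩ := multi r ρ c hr hρ hc H L f hio hQ hpw
  refine ⟨g, ?_, hdist⟩
  intro x
  have := hTcov (Set.mem_univ x)
  rw [Set.mem_iUnion₂] at this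
  obtain ⟨s, hsT, hxs⟩ := this
  have hsls : s ∈ L.map Prod.snd := hsnd ▸ (hlsmem s).mpr hsT
  obtain ⟨p, hpL, rfl⟩ := List.mem_map.mp hsls
  obtain ⟨t, hgt⟩ := hits p hpL
  exact ⟨t, by rw [hgt, dist_comm]; exact Metric.mem_ball.mp hxs⟩
/-- Uniform local path connectedness on a compact space. -/
lemma key [CompactSpace K] [LocallyPathConnectedSpace K] {ε : ℝ} (hε : 0 < ε) :
    ∃ δ, 0 < δ ∧ ∀ x y : K, dist x y < δ → ∃ γ : Path x y, ∀ u, dist (γ u) x ≤ ε := by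
  have hU : ∀ x : K, ∃ U : Set K, IsOpen U ∧ x ∈ U ∧ IsPathConnected U ∧
      U ⊆ Metric.ball x (ε / 2) := by
    intro x
    obtain ⟨U, ⟨hUo, hxU, hUpc⟩, hUsub⟩ := (isOpen_isPathConnected_basis x).mem_iff.mp
      (Metric.ball_mem_nhds x (half_pos hε))
    exact ⟨U, hUo, hxU, hUpc, hUsub⟩
  choose U hUo hxU hUpc hUsub using hU
  obtain ⟨δ, hδ, hcov⟩ := lebesgue_number_lemma_of_metric
    (isCompact_univ : IsCompact (Set.univ : Set K)) hUo
    (fun x _ => Set.mem_iUnion.mpr ⟨x, hxU x⟩)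
  refine ⟨δ, hδ, fun x y hxy => ?_⟩
  obtain ⟨cpt, hsub⟩ := hcov x (Set.mem_univ x)
  have hx : x ∈ U cpt := hsub (Metric.mem_ball_self hδ)
  have hy : y ∈ U cpt := hsub (by rwa [Metric.mem_ball, dist_comm])
  obtain ⟨γ, hγ⟩ := (hUpc cpt).joinedIn x hx y hy
  refine ⟨γ, fun u => ?_⟩
  have h1 : dist (γ u) cpt < ε / 2 := Metric.mem_ball.mp (hUsub cpt (hγ u))
  have h2 : dist x cpt < ε / 2 := Metric.mem_ball.mp (hUsub cpt hx)
  calc dist (γ u) x ≤ dist (γ u) cpt + dist cpt x := dist_triangle _ _ _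
    _ ≤ ε := by rw [dist_comm cpt x]; linarith

lemma main [CompactSpace K] [Nonempty K] [ConnectedSpace K] [LocallyPathConnectedSpace K] :
    ∃ F : C(unitInterval, K), Function.Surjective F := by
  have hpc : PathConnectedSpace K := pathConnectedSpace_iff_connectedSpace.mpr ‹_›
  obtain ⟨p⟩ := (inferInstance : Nonempty K)
  set D : ℝ := Metric.diam (Set.univ : Set K) with hDdef
  have hD : 0 ≤ D := Metric.diam_nonneg
  have hbdd : Bornology.IsBounded (Set.univ : Set K) := isCompact_univ.isBounded
  have hdistD : ∀ x y : K, dist x y ≤ D := fun x y =>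
    Metric.dist_le_diam_of_mem hbdd trivial trivial
  have hkey : ∀ n : ℕ, ∃ δ, 0 < δ ∧ δ ≤ (1/2:ℝ)^n ∧
      ∀ x y : K, dist x y < δ → ∃ γ : Path x y, ∀ u, dist (γ u) x ≤ (1/2:ℝ)^n := by
    intro n
    obtain ⟨δ, hδ, hδp⟩ := key (K := K) (show (0:ℝ) < (1/2:ℝ)^n by positivity)
    exact ⟨min δ ((1/2:ℝ)^n), lt_min hδ (by positivity), min_le_right _ _,
      fun x y hxy => hδp x y (lt_of_lt_of_le hxy (min_le_left _ _))⟩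
  choose δs hδpos hδle hδpath using hkey
  set Q : ℕ → C(unitInterval, K) → Prop :=
    fun n f => ∀ x : K, ∃ t, dist (f t) x < δs (n+1) / 2 with hQdef
  have step : ∀ n (f : C(unitInterval, K)), Q n f →
      ∃ g, Q (n+1) g ∧ ∀ t, dist (g t) (f t) ≤ 3 * (1/2:ℝ)^(n+1) := by
    intro n f hfQ
    obtain ⟨g, hg1, hg2⟩ := stage (δs (n+1)) ((1/2:ℝ)^(n+1)) (δs (n+2)/2)
      (hδpos _) (by positivity) (half_pos (hδpos _)) (hδpath _) f hfQ
    refine ⟨g, hg1, fun t => le_trans (hg2 t) ?_⟩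
    have := hδle (n+1)
    linarith
  have base : ∃ g, Q 0 g := by
    obtain ⟨g, hg1, _⟩ := stage (2*D+2) D (δs 1 / 2) (by linarith) hD
      (half_pos (hδpos 1))
      (fun x y _ => by
        obtain ⟨γ⟩ := PathConnectedSpace.joined x y
        exact ⟨γ, fun u => hdistD _ _⟩)
      (ContinuousMap.const _ p)
      (fun x => ⟨0, by
        simp only [ContinuousMap.const_apply]
        have := hdistD p x; linarith⟩)
    exact ⟨g, hg1⟩
  choose stepf hstepQ hstepd using step
  obtain ⟨g₀, hg₀⟩ := base
  set A : (n : ℕ) → {f : C(unitInterval, K) // Q n f} :=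
    fun n => Nat.rec ⟨g₀, hg₀⟩ (fun n prev => ⟨stepf n prev.1 prev.2, hstepQ n prev.1 prev.2⟩) n
    with hA
  set d : ℕ → ℝ := fun n => 3 * (1/2:ℝ)^n with hd
  have hsum : Summable d := (summable_geometric_of_lt_one (by norm_num) (by norm_num)).mul_left 3
  have hAd : ∀ n, dist ((A n).1) ((A (n+1)).1) ≤ d n := by
    intro n
    have h1 : (A (n+1)).1 = stepf n (A n).1 (A n).2 := rfl
    rw [h1, dist_comm]
    refine le_trans ((ContinuousMap.dist_le (by positivity)).mpr
      (hstepd n (A n).1 (A n).2)) ?_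
    rw [hd]
    simp only
    rw [pow_succ]
    nlinarith [pow_pos (show (0:ℝ) < 1/2 by norm_num) n]
  have hcauchy : CauchySeq (fun n => (A n).1) := cauchySeq_of_dist_le_of_summable d hAd hsum
  obtain ⟨F, hF⟩ := cauchySeq_tendsto_of_complete hcauchy
  have htail : ∀ n, dist ((A n).1) F ≤ 6 * (1/2:ℝ)^n := by
    intro n
    refine le_trans (dist_le_tsum_of_dist_le_of_tendsto d hAd hsum hF n) (le_of_eq ?_)
    calc ∑' m, d (n + m) = ∑' m : ℕ, (3 * (1/2:ℝ)^n) * (1/2:ℝ)^m := by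
          congr 1; funext m; rw [hd]; simp only; rw [pow_add]; ring
      _ = (3 * (1/2:ℝ)^n) * 2 := by rw [tsum_mul_left, tsum_geometric_two]
      _ = 6 * (1/2:ℝ)^n := by ring
  refine ⟨F, fun x => ?_⟩
  have hclosed : IsClosed (Set.range F) := (isCompact_range F.continuous).isClosed
  have hmem : x ∈ closure (Set.range F) := by
    rw [Metric.mem_closure_iff]
    intro ε hε
    obtain ⟨n, hn⟩ := exists_pow_lt_of_lt_one (show (0:ℝ) < ε/8 by linarith)
      (show (1/2:ℝ) < 1 by norm_num)
    obtain ⟨t, ht⟩ := (A n).2 x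
    refine ⟨F t, Set.mem_range_self t, ?_⟩
    have h1 : dist ((A n).1 t) (F t) ≤ 6 * (1/2:ℝ)^n :=
      le_trans (ContinuousMap.dist_apply_le_dist t) (htail n)
    have h2 : δs (n+1) / 2 ≤ (1/2:ℝ)^n := by
      have := hδle (n+1)
      have h3 : ((1:ℝ)/2)^(n+1) ≤ (1/2:ℝ)^n := by
        rw [pow_succ]
        nlinarith [pow_pos (show (0:ℝ) < 1/2 by norm_num) n]
      have h4 : (0:ℝ) ≤ (1/2:ℝ)^(n+1) := by positivity
      linarith
    calc dist x (F t) ≤ dist x ((A n).1 t) + dist ((A n).1 t) (F t) := dist_triangle _ _ _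
      _ ≤ δs (n+1)/2 + 6 * (1/2:ℝ)^n := by
          rw [dist_comm x]
          exact add_le_add ht.le h1
      _ ≤ 7 * (1/2:ℝ)^n := by linarith
      _ < ε := by nlinarith [pow_pos (show (0:ℝ) < 1/2 by norm_num) n]
  rw [hclosed.closure_eq] at hmem
  exact hmem.imp fun t ht => ht

end HMaux

/-- Hahn–Mazurkiewicz: a compact metric space `K` is a continuous image of `[0,1]`
if and only if it is nonempty, connected and locally path-connected. -/
theorem continuous_image_of_unit_interval_iff
    {K : Type*} [MetricSpace K] [CompactSpace K] :
    (∃ f : Set.Icc (0 : ℝ) 1 → K, Continuous f ∧ Function.Surjective f) ↔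
      (Nonempty K ∧ ConnectedSpace K ∧ LocPathConnectedSpace K) := by
  constructor
  · rintro ⟨f, hc, hs⟩
    refine ⟨⟨f ⟨0, by norm_num⟩⟩, ?_, ?_⟩
    · have : ConnectedSpace (Set.Icc (0:ℝ) 1) :=
        Subtype.connectedSpace (isConnected_Icc (by norm_num))
      exact (connectedSpace_iff_univ).mpr (hs.range_eq ▸ isConnected_range hc)
    · exact (Topology.IsQuotientMap.of_surjective_continuous hs hc).locPathConnectedSpace
  · rintro ⟨hne, hconn, hlpc⟩
    haveI : LocallyPathConnectedSpace K := hlpc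
    obtain ⟨F, hF⟩ := HMaux.main (K := K)
    exact ⟨F, F.continuous, hF⟩
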